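/- Let G be a graph of maximum degree Δ on n vertices. If every connected component of G contains a vertex of degree less than Δ, then γ'_R(G) ≤ ((2Δ − 2)/(2Δ − 1))·n. -/

import Mathlib

open Finset SimpleGraph

/-- An edge Roman dominating function: values in {0,1,2} on edges (0 elsewhere),
and every edge with value 0 is adjacent to a distinct edge with value 2
sharing an endpoint with it. -/
def EdgeRDF {V : Type*} (G : SimpleGraph V) (f : Sym2 V → ℕ) : Prop :=
  (∀ e, f e ≤ 2) ∧ (∀ e, e ∉ G.edgeSet → f e = 0) ∧
  (∀ e ∈ G.edgeSet, f e = 0 →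
    ∃ e' ∈ G.edgeSet, f e' = 2 ∧ e' ≠ e ∧ ∃ v, v ∈ e ∧ v ∈ e')

/-- The edge Roman domination number: the minimum weight of an
edge Roman dominating function. -/
noncomputable def edgeRomanNumber (V : Type*) [Fintype V] [DecidableEq V]
    (G : SimpleGraph V) : ℕ :=
  sInf {w | ∃ f : Sym2 V → ℕ, EdgeRDF G f ∧ w = ∑ e : Sym2 V, f e}

namespace ERDaux

variable {V : Type*} [Fintype V] [DecidableEq V]

/-- endpoints of a `Sym2` as a finset -/
def pairF : Sym2 V → Finset V :=
  Sym2.lift ⟨fun a b => {a, b}, by intro a b; ext x; simp [or_comm]⟩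

@[simp] lemma pairF_mk (a b : V) : pairF s(a, b) = {a, b} := rfl

@[simp] lemma mem_pairF {a : V} {e : Sym2 V} : a ∈ pairF e ↔ a ∈ e := by
  induction e using Sym2.ind with
  | _ x y => simp [Sym2.mem_iff]

lemma card_pairF {e : Sym2 V} (h : ¬ e.IsDiag) : (pairF e).card = 2 := by
  induction e using Sym2.ind with
  | _ x y =>
    have hxy : x ≠ y := by simpa using h
    simp [pairF_mk, Finset.card_insert_of_notMem, hxy]

/-- the graph obtained by deleting all edges meeting `S` -/
def cut (G : SimpleGraph V) (S : Finset V) : SimpleGraph V where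
  Adj x y := G.Adj x y ∧ x ∉ S ∧ y ∉ S
  symm := by constructor; intro x y ⟨h, hx, hy⟩; exact ⟨h.symm, hy, hx⟩
  loopless := by constructor; intro x ⟨h, _, _⟩; exact G.loopless.irrefl x h

lemma cut_adj {G : SimpleGraph V} {S : Finset V} {x y : V} :
    (cut G S).Adj x y ↔ G.Adj x y ∧ x ∉ S ∧ y ∉ S := Iff.rfl

instance cutDec (G : SimpleGraph V) [DecidableRel G.Adj] (S : Finset V) :
    DecidableRel (cut G S).Adj := fun _ _ => instDecidableAnd

lemma cut_edgeSet {G : SimpleGraph V} {S : Finset V} {e : Sym2 V} :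
    e ∈ (cut G S).edgeSet ↔ e ∈ G.edgeSet ∧ ∀ v ∈ e, v ∉ S := by
  induction e using Sym2.ind with
  | _ x y =>
    simp only [mem_edgeSet, cut_adj, Sym2.mem_iff]
    constructor
    · rintro ⟨h, hx, hy⟩
      exact ⟨h, by rintro v (rfl | rfl) <;> assumption⟩
    · rintro ⟨h, hv⟩
      exact ⟨h, hv x (Or.inl rfl), hv y (Or.inr rfl)⟩

lemma cut_nbr_subset (G : SimpleGraph V) [DecidableRel G.Adj] (S : Finset V) (v : V) :
    (cut G S).neighborFinset v ⊆ G.neighborFinset v := by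
  intro x hx
  simp only [mem_neighborFinset] at *
  exact hx.1

lemma cut_degree_le (G : SimpleGraph V) [DecidableRel G.Adj] (S : Finset V) (v : V) :
    (cut G S).degree v ≤ G.degree v :=
  Finset.card_le_card (cut_nbr_subset G S v)

lemma cut_degree_lt (G : SimpleGraph V) [DecidableRel G.Adj] (S : Finset V) {v x : V}
    (h : G.Adj v x) (hx : x ∈ S) : (cut G S).degree v < G.degree v := by
  apply Finset.card_lt_card
  refine ⟨cut_nbr_subset G S v, fun hsub => ?_⟩
  have hmem : x ∈ G.neighborFinset v := by simpa [mem_neighborFinset] using h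
  have := hsub hmem
  simp only [mem_neighborFinset, cut_adj] at this
  exact this.2.2 hx

lemma reach_cut (G : SimpleGraph V) [DecidableRel G.Adj] (S : Finset V) (Δ : ℕ)
    (hdeg : ∀ v, G.degree v ≤ Δ) {v w₀ : V} (p : G.Walk v w₀) :
    G.degree w₀ < Δ →
    v ∉ S → ∃ u, (cut G S).Reachable v u ∧ (cut G S).degree u < Δ := by
  induction p with
  | nil =>
    intro hw hvS
    exact ⟨_, Reachable.refl _, lt_of_le_of_lt (cut_degree_le G S _) hw⟩
  | @cons a b c h p ih =>
    intro hw hvS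
    by_cases hbS : b ∈ S
    · exact ⟨a, Reachable.refl _,
        lt_of_lt_of_le (cut_degree_lt G S h hbS) (hdeg a)⟩
    · obtain ⟨u, hr, hd⟩ := ih hw hbS
      have : (cut G S).Adj a b := ⟨h, hvS, hbS⟩
      exact ⟨u, this.reachable.trans hr, hd⟩

lemma edgeRDF_zero (G : SimpleGraph V) (hE : ∀ x y : V, ¬ G.Adj x y) :
    EdgeRDF G (fun _ => 0) := by
  refine ⟨fun _ => by norm_num, fun _ _ => rfl, fun e he => ?_⟩
  exfalso
  induction e using Sym2.ind with
  | _ x y => exact hE x y (by simpa using he)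

lemma combine (G : SimpleGraph V) (S : Finset V) (f₀ f' : Sym2 V → ℕ)
    (h' : EdgeRDF (cut G S) f')
    (h1 : ∀ e, f₀ e ≤ 2)
    (h2 : ∀ e, f₀ e ≠ 0 → e ∈ G.edgeSet)
    (h4 : ∀ e, f₀ e ≠ 0 → ∃ v ∈ e, v ∈ S)
    (h3 : ∀ e ∈ G.edgeSet, (∃ v ∈ e, v ∈ S) → f₀ e = 0 →
      ∃ e' ∈ G.edgeSet, f₀ e' = 2 ∧ e' ≠ e ∧ ∃ v, v ∈ e ∧ v ∈ e') :
    EdgeRDF G (fun e => f₀ e + f' e) := by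
  obtain ⟨h'1, h'2, h'3⟩ := h'
  have hf'zero : ∀ e, (∃ v ∈ e, v ∈ S) → f' e = 0 := by
    intro e he
    apply h'2
    intro hmem
    obtain ⟨v, hv, hvS⟩ := he
    exact (cut_edgeSet.mp hmem).2 v hv hvS
  have hf₀zero : ∀ e, e ∈ (cut G S).edgeSet → f₀ e = 0 := by
    intro e he
    by_contra h
    obtain ⟨v, hv, hvS⟩ := h4 e h
    exact (cut_edgeSet.mp he).2 v hv hvS
  refine ⟨?_, ?_, ?_⟩
  · intro e
    by_cases h : f₀ e = 0
    · simpa [h] using h'1 e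
    · have : f' e = 0 := hf'zero e (h4 e h)
      simpa [this] using h1 e
  · intro e he
    have hf0 : f₀ e = 0 := by
      by_contra h; exact he (h2 e h)
    have hf' : f' e = 0 := by
      apply h'2
      intro hmem
      exact he (cut_edgeSet.mp hmem).1
    simp [hf0, hf']
  · intro e he hsum
    have hsum' : f₀ e + f' e = 0 := hsum
    have hf0 : f₀ e = 0 := by omega
    have hf' : f' e = 0 := by omega
    by_cases hS : ∃ v ∈ e, v ∈ S
    · obtain ⟨e', he'E, he'2, hne, v, hv1, hv2⟩ := h3 e he hS hf0
      have hz : f' e' = 0 := hf'zero e' (h4 e' (by omega))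
      exact ⟨e', he'E, show f₀ e' + f' e' = 2 by omega, hne, v, hv1, hv2⟩
    · have heC : e ∈ (cut G S).edgeSet := by
        rw [cut_edgeSet]
        exact ⟨he, fun v hv hvS => hS ⟨v, hv, hvS⟩⟩
      obtain ⟨e', he'E, he'2, hne, hv⟩ := h'3 e heC hf'
      have hz : f₀ e' = 0 := hf₀zero e' he'E
      exact ⟨e', (cut_edgeSet.mp he'E).1, show f₀ e' + f' e' = 2 by omega, hne, hv⟩

lemma costle (Δ cost s : ℕ) (hΔ : 1 ≤ Δ) (h : cost * (2 * Δ - 1) ≤ (2 * Δ - 2) * s) :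
    (cost : ℝ) ≤ (2 * Δ - 2 : ℝ) / (2 * Δ - 1) * s := by
  have h1 : (1 : ℝ) ≤ (Δ : ℝ) := by exact_mod_cast hΔ
  have hpos : (0 : ℝ) < 2 * (Δ : ℝ) - 1 := by linarith
  rw [div_mul_eq_mul_div, le_div_iff₀ hpos]
  have hc1 : ((2 * Δ - 1 : ℕ) : ℝ) = 2 * (Δ : ℝ) - 1 := by
    have : 1 ≤ 2 * Δ := by omega
    push_cast [Nat.cast_sub this]; ring
  have hc2 : ((2 * Δ - 2 : ℕ) : ℝ) = 2 * (Δ : ℝ) - 2 := by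
    have : 2 ≤ 2 * Δ := by omega
    push_cast [Nat.cast_sub this]; ring
  calc (cost : ℝ) * (2 * (Δ:ℝ) - 1) = ((cost * (2 * Δ - 1) : ℕ) : ℝ) := by
        rw [Nat.cast_mul, hc1]
    _ ≤ (((2 * Δ - 2) * s : ℕ) : ℝ) := by exact_mod_cast h
    _ = (2 * (Δ:ℝ) - 2) * s := by rw [Nat.cast_mul, hc2]

lemma nat0 (Δ m : ℕ) (hm : m + 1 ≤ Δ) :
    2 * m * (2 * Δ - 1) ≤ (2 * Δ - 2) * (2 * m + 1) := by
  obtain ⟨D, rfl⟩ : ∃ D, Δ = D + 1 := ⟨Δ - 1, by omega⟩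
  have e1 : 2 * (D + 1) - 1 = 2 * D + 1 := by omega
  have e2 : 2 * (D + 1) - 2 = 2 * D := by omega
  rw [e1, e2]
  nlinarith [hm]

lemma nat1 (Δ m : ℕ) (hm : m + 2 ≤ Δ) :
    (2 * m + 1) * (2 * Δ - 1) ≤ (2 * Δ - 2) * (2 * m + 2) := by
  obtain ⟨D, rfl⟩ : ∃ D, Δ = D + 2 := ⟨Δ - 2, by omega⟩
  have e1 : 2 * (D + 2) - 1 = 2 * D + 3 := by omega
  have e2 : 2 * (D + 2) - 2 = 2 * D + 2 := by omega
  rw [e1, e2]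
  nlinarith [hm]

lemma nat2 (Δ m τ : ℕ) (hτ : 2 ≤ τ) (hm : m + τ + 1 ≤ Δ) :
    (2 * m + 2) * (2 * Δ - 1) ≤ (2 * Δ - 2) * (2 * m + 1 + τ) := by
  obtain ⟨D, rfl⟩ : ∃ D, Δ = D + 2 := ⟨Δ - 2, by omega⟩
  have e1 : 2 * (D + 2) - 1 = 2 * D + 3 := by omega
  have e2 : 2 * (D + 2) - 2 = 2 * D + 2 := by omega
  rw [e1, e2]
  have key : 2 * D + 3 ≤ τ * (D + 2) := by
    calc 2 * D + 3 ≤ 2 * (D + 2) := by omega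
    _ ≤ τ * (D + 2) := Nat.mul_le_mul_right _ hτ
  have key2 : m + τ ≤ D + 1 := by omega
  nlinarith [key, key2, hτ]

def covN (G : SimpleGraph V) [DecidableRel G.Adj] (w : V) (M' : Finset (Sym2 V)) : ℕ :=
  ((G.neighborFinset w).filter (fun a => a ∈ M'.biUnion pairF)).card

def candSet (G : SimpleGraph V) [DecidableRel G.Adj] (w : V) : Finset (Finset (Sym2 V)) :=
  G.edgeFinset.powerset.filter
    (fun M => (∀ e ∈ M, w ∉ e) ∧ ∀ e₁ ∈ M, ∀ e₂ ∈ M, e₁ ≠ e₂ → ∀ v ∈ e₁, v ∉ e₂)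

lemma mem_candSet {G : SimpleGraph V} [DecidableRel G.Adj] {w : V} {M : Finset (Sym2 V)} :
    M ∈ candSet G w ↔ M ⊆ G.edgeFinset ∧ (∀ e ∈ M, w ∉ e) ∧
      ∀ e₁ ∈ M, ∀ e₂ ∈ M, e₁ ≠ e₂ → ∀ v ∈ e₁, v ∉ e₂ := by
  simp [candSet, Finset.mem_filter, Finset.mem_powerset, and_assoc]

lemma main_ind (Δ : ℕ) (hΔ : 1 ≤ Δ) :
    ∀ (n : ℕ) (G : SimpleGraph V) [DecidableRel G.Adj] (R : Finset V),
      R.card ≤ n →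
      (∀ x y : V, G.Adj x y → x ∈ R ∧ y ∈ R) →
      (∀ v, G.degree v ≤ Δ) →
      (∀ v, v ∈ R → ∃ w, G.Reachable v w ∧ G.degree w < Δ) →
      ∃ f : Sym2 V → ℕ, EdgeRDF G f ∧
        ((∑ e : Sym2 V, f e : ℕ) : ℝ) ≤ (2 * Δ - 2 : ℝ) / (2 * Δ - 1) * R.card := by
  have hβ0 : (0:ℝ) ≤ (2 * Δ - 2 : ℝ) / (2 * Δ - 1) := by
    have : (1:ℝ) ≤ (Δ : ℝ) := by exact_mod_cast hΔ
    apply div_nonneg <;> linarith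
  intro n
  induction n with
  | zero =>
    intro G _ R hcard hsupp hdeg hcomp
    refine ⟨fun _ => 0, edgeRDF_zero G ?_, by
      simpa using mul_nonneg hβ0 (Nat.cast_nonneg R.card)⟩
    intro x y h
    have hmem := (hsupp x y h).1
    have hR : R = ∅ := Finset.card_eq_zero.mp (Nat.le_zero.mp hcard)
    simp [hR] at hmem
  | succ n IH =>
    intro G instG R hcard hsupp hdeg hcomp
    by_cases hadj : ∃ p q : V, G.Adj p q
    swap
    · push_neg at hadj
      exact ⟨fun _ => 0, edgeRDF_zero G hadj, by
        simpa using mul_nonneg hβ0 (Nat.cast_nonneg R.card)⟩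
    obtain ⟨p, q, hpq⟩ := hadj
    obtain ⟨w, hreach, hwΔ⟩ := hcomp p (hsupp p q hpq).1
    have hwdeg : 0 < G.degree w := by
      refine hreach.symm.elim fun walk => ?_
      cases walk with
      | nil => exact (G.degree_pos_iff_exists_adj _).mpr ⟨q, hpq⟩
      | cons h _ => exact (G.degree_pos_iff_exists_adj _).mpr ⟨_, h⟩
    have hΔ2 : 2 ≤ Δ := by omega
    have hwR : w ∈ R := by
      obtain ⟨a, ha⟩ := (G.degree_pos_iff_exists_adj w).mp hwdeg
      exact (hsupp w a ha).1
    have hwA : w ∉ G.neighborFinset w := by simp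
    classical
    -- choose an optimal matching avoiding w
    have hcne : (candSet G w).Nonempty := ⟨∅, mem_candSet.mpr (by simp)⟩
    obtain ⟨M₁, hM₁, hmax₁⟩ := Finset.exists_max_image (candSet G w) (covN G w) hcne
    obtain ⟨M, hM2, hmin₂⟩ := Finset.exists_min_image
      ((candSet G w).filter (fun M' => covN G w M₁ ≤ covN G w M')) Finset.card
      ⟨M₁, Finset.mem_filter.mpr ⟨hM₁, le_refl _⟩⟩
    have hMc : M ∈ candSet G w := (Finset.mem_filter.mp hM2).1
    have hMcovmax : ∀ M' ∈ candSet G w, covN G w M' ≤ covN G w M :=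
      fun M' h' => le_trans (hmax₁ M' h') (Finset.mem_filter.mp hM2).2
    have hMmin : ∀ M' ∈ candSet G w, covN G w M ≤ covN G w M' → M.card ≤ M'.card := by
      intro M' h' hle
      exact hmin₂ M' (Finset.mem_filter.mpr
        ⟨h', le_trans (Finset.mem_filter.mp hM2).2 hle⟩)
    have hMe : M ⊆ G.edgeFinset := (mem_candSet.mp hMc).1
    have hMw : ∀ e ∈ M, w ∉ e := (mem_candSet.mp hMc).2.1
    have hMd : ∀ e₁ ∈ M, ∀ e₂ ∈ M, e₁ ≠ e₂ → ∀ v ∈ e₁, v ∉ e₂ := (mem_candSet.mp hMc).2.2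
    set VM : Finset V := M.biUnion pairF with hVM
    have hVMmem : ∀ {x : V}, x ∈ VM ↔ ∃ e ∈ M, x ∈ e := by
      intro x; simp [hVM, Finset.mem_biUnion]
    have hVMw : w ∉ VM := by
      intro h
      obtain ⟨e, he, hx⟩ := hVMmem.mp h
      exact hMw e he hx
    have hVMR : ∀ x ∈ VM, x ∈ R := by
      intro x hx
      obtain ⟨e, he, hxe⟩ := hVMmem.mp hx
      obtain ⟨y, rfl⟩ := Sym2.mem_iff_exists.mp hxe
      exact (hsupp x y ((G.mem_edgeSet).mp (mem_edgeFinset.mp (hMe he)))).1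
    have hVMcard : VM.card = 2 * M.card := by
      rw [hVM, Finset.card_biUnion]
      · rw [Finset.sum_congr rfl
          (fun e he => card_pairF (G.not_isDiag_of_mem_edgeSet
            (mem_edgeFinset.mp (hMe he))))]
        simp [mul_comm]
      · intro e₁ h1 e₂ h2 hne
        rw [Function.onFun, Finset.disjoint_left]
        intro v hv1 hv2
        exact hMd e₁ h1 e₂ h2 hne v (mem_pairF.mp hv1) (mem_pairF.mp hv2)
    set T : Finset V := (G.neighborFinset w).filter (fun a => a ∉ M.biUnion pairF) with hT
    have hTmem : ∀ {a : V}, a ∈ T ↔ G.Adj w a ∧ a ∉ VM := by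
      intro a; simp [hT, Finset.mem_filter, mem_neighborFinset, hVM]
    have hsplit : covN G w M + T.card = G.degree w := by
      simp only [covN]
      rw [hT]
      exact Finset.card_filter_add_card_filter_not _
    have hTR : ∀ x ∈ T, x ∈ R := fun x hx => (hsupp w x (hTmem.mp hx).1).2
    -- F2 : uncovered neighbours of w only see w and V(M)
    have hF2 : ∀ t' ∈ T, ∀ z, G.Adj t' z → z = w ∨ z ∈ VM := by
      intro t' ht' z hz
      by_contra hcon
      push_neg at hcon
      obtain ⟨hzw, hzVM⟩ := hcon
      have ht'w : G.Adj w t' := (hTmem.mp ht').1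
      have ht'VM : t' ∉ VM := (hTmem.mp ht').2
      have ht'ne : t' ≠ w := fun h => G.loopless.irrefl w (h ▸ ht'w)
      have hM'c : insert s(t',z) M ∈ candSet G w := by
        rw [mem_candSet]
        refine ⟨Finset.insert_subset (mem_edgeFinset.mpr ((G.mem_edgeSet).mpr hz)) hMe,
          ?_, ?_⟩
        · intro e he
          rcases Finset.mem_insert.mp he with rfl | he
          · intro hmem
            rcases Sym2.mem_iff.mp hmem with h | h
            · exact ht'ne h.symm
            · exact hzw h.symm
          · exact hMw e he
        · intro e₁ h₁ e₂ h₂ hne v hv1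
          rcases Finset.mem_insert.mp h₁ with rfl | h₁ <;>
            rcases Finset.mem_insert.mp h₂ with h₂eq | h₂
          · exact absurd h₂eq.symm hne
          · intro hv2
            have hvVM : v ∈ VM := hVMmem.mpr ⟨e₂, h₂, hv2⟩
            rcases Sym2.mem_iff.mp hv1 with rfl | rfl
            · exact ht'VM hvVM
            · exact hzVM hvVM
          · subst h₂eq
            intro hv2
            have hvVM : v ∈ VM := hVMmem.mpr ⟨e₁, h₁, hv1⟩
            rcases Sym2.mem_iff.mp hv2 with rfl | rfl
            · exact ht'VM hvVM
            · exact hzVM hvVM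
          · exact hMd e₁ h₁ e₂ h₂ hne v hv1
      have hlt : covN G w M < covN G w (insert s(t',z) M) := by
        apply Finset.card_lt_card
        constructor
        · intro a ha
          rw [Finset.mem_filter] at ha ⊢
          exact ⟨ha.1, Finset.biUnion_subset_biUnion_of_subset_left pairF
            (Finset.subset_insert _ _) ha.2⟩
        · intro hsub
          have ht'cov : t' ∈ (G.neighborFinset w).filter
              (fun a => a ∈ (insert s(t',z) M).biUnion pairF) := by
            rw [Finset.mem_filter]
            refine ⟨(mem_neighborFinset _ _ _).mpr ht'w, Finset.mem_biUnion.mpr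
              ⟨s(t',z), Finset.mem_insert_self _ _, mem_pairF.mpr (Sym2.mem_mk_left _ _)⟩⟩
          have := hsub ht'cov
          rw [Finset.mem_filter] at this
          exact ht'VM (hVM ▸ this.2)
      exact absurd (hMcovmax _ hM'c) (not_le.mpr hlt)
    -- F1 : M has at most as many edges as covered neighbours of w
    have hmeet : ∀ e ∈ M, ∃ a, a ∈ G.neighborFinset w ∧ a ∈ e := by
      intro e he
      by_contra hcon
      push_neg at hcon
      have herase : M.erase e ∈ candSet G w := by
        rw [mem_candSet]
        exact ⟨subset_trans (Finset.erase_subset e M) hMe,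
          fun e' he' => hMw e' (Finset.mem_of_mem_erase he'),
          fun e₁ h₁ e₂ h₂ => hMd e₁ (Finset.mem_of_mem_erase h₁) e₂
            (Finset.mem_of_mem_erase h₂)⟩
      have hcoveq : covN G w M ≤ covN G w (M.erase e) := by
        apply Finset.card_le_card
        intro a ha
        rw [Finset.mem_filter] at ha ⊢
        refine ⟨ha.1, ?_⟩
        obtain ⟨e', he', hae'⟩ := Finset.mem_biUnion.mp ha.2
        have he'ne : e' ≠ e := by
          rintro rfl
          exact hcon a ha.1 (mem_pairF.mp hae')
        exact Finset.mem_biUnion.mpr ⟨e', Finset.mem_erase.mpr ⟨he'ne, he'⟩, hae'⟩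
      have hmin' := hMmin (M.erase e) herase hcoveq
      have hc := Finset.card_erase_of_mem he
      have hpos : 0 < M.card := Finset.card_pos.mpr ⟨e, he⟩
      omega
    have hF1 : M.card ≤ covN G w M := by
      set g : Sym2 V → V := fun e =>
        if h : ∃ a, a ∈ G.neighborFinset w ∧ a ∈ e then h.choose else w with hg
      apply Finset.card_le_card_of_injOn g
      · intro e he
        have hex := hmeet e he
        have hspec := hex.choose_spec
        rw [show covN G w M = ((G.neighborFinset w).filter
          (fun a => a ∈ M.biUnion pairF)).card from rfl] at *
        rw [Finset.mem_coe, Finset.mem_filter, hg]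
        simp only [dif_pos hex]
        exact ⟨hspec.1, Finset.mem_biUnion.mpr ⟨e, he, mem_pairF.mpr hspec.2⟩⟩
      · intro e₁ h₁ e₂ h₂ heq
        rw [Finset.mem_coe] at h₁ h₂
        by_contra hne
        have hex1 := hmeet e₁ h₁
        have hex2 := hmeet e₂ h₂
        have hge1 : g e₁ = hex1.choose := by rw [hg]; simp only [dif_pos hex1]
        have hge2 : g e₂ = hex2.choose := by rw [hg]; simp only [dif_pos hex2]
        apply hMd e₁ h₁ e₂ h₂ hne (g e₁)
        · rw [hge1]; exact hex1.choose_spec.2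
        · rw [heq, hge2]; exact hex2.choose_spec.2
    -- the dominator helper
    have HDOM : ∀ (f₀ : Sym2 V → ℕ), (∀ e ∈ M, f₀ e = 2) →
        ∀ e : Sym2 V, f₀ e = 0 → ∀ x, x ∈ e → x ∈ VM →
        ∃ e' ∈ G.edgeSet, f₀ e' = 2 ∧ e' ≠ e ∧ ∃ v, v ∈ e ∧ v ∈ e' := by
      intro f₀ hfM e hf0 x hxe hxVM
      obtain ⟨e', he'M, hx'⟩ := hVMmem.mp hxVM
      refine ⟨e', mem_edgeFinset.mp (hMe he'M), hfM e' he'M, ?_, x, hxe, hx'⟩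
      rintro rfl
      have := hfM _ he'M
      omega
    have hMS : ∀ e, e ∈ M → ∃ v, v ∈ e ∧ v ∈ VM := by
      intro e
      induction e using Sym2.ind with
      | _ x y =>
        intro he
        exact ⟨x, Sym2.mem_mk_left x y, hVMmem.mpr ⟨_, he, Sym2.mem_mk_left x y⟩⟩
    -- the recursion driver
    have RECUR : ∀ (S : Finset V) (f₀ : Sym2 V → ℕ),
        S ⊆ R → w ∈ S →
        (∀ e, f₀ e ≤ 2) →
        (∀ e, f₀ e ≠ 0 → e ∈ G.edgeSet) →
        (∀ e, f₀ e ≠ 0 → ∃ v ∈ e, v ∈ S) →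
        (∀ e ∈ G.edgeSet, (∃ v ∈ e, v ∈ S) → f₀ e = 0 →
          ∃ e' ∈ G.edgeSet, f₀ e' = 2 ∧ e' ≠ e ∧ ∃ v, v ∈ e ∧ v ∈ e') →
        ((∑ e : Sym2 V, f₀ e) * (2 * Δ - 1) ≤ (2 * Δ - 2) * S.card) →
        ∃ f : Sym2 V → ℕ, EdgeRDF G f ∧
          ((∑ e : Sym2 V, f e : ℕ) : ℝ) ≤ (2 * Δ - 2 : ℝ) / (2 * Δ - 1) * R.card := by
      intro S f₀ hSR hwS h1 h2 h4 h3 hcost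
      have hcard' : (R \ S).card ≤ n := by
        have hle : S.card ≤ R.card := Finset.card_le_card hSR
        have hpos : 0 < S.card := Finset.card_pos.mpr ⟨w, hwS⟩
        rw [Finset.card_sdiff_of_subset hSR]
        omega
      obtain ⟨f', hf', hf'sum⟩ := IH (cut G S) (R \ S) hcard'
        (fun x y h => ⟨Finset.mem_sdiff.mpr ⟨(hsupp x y h.1).1, h.2.1⟩,
                       Finset.mem_sdiff.mpr ⟨(hsupp x y h.1).2, h.2.2⟩⟩)
        (fun v => le_trans (cut_degree_le G S v) (hdeg v))
        (by
          intro v hv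
          obtain ⟨w₀, hr, hw₀⟩ := hcomp v (Finset.mem_sdiff.mp hv).1
          exact hr.elim fun walk =>
            reach_cut G S Δ hdeg walk hw₀ (Finset.mem_sdiff.mp hv).2)
      refine ⟨fun e => f₀ e + f' e, combine G S f₀ f' hf' h1 h2 h4 h3, ?_⟩
      rw [Finset.sum_add_distrib, Nat.cast_add]
      have hb1 : ((∑ e : Sym2 V, f₀ e : ℕ) : ℝ) ≤
          (2 * Δ - 2 : ℝ) / (2 * Δ - 1) * S.card := costle Δ _ _ hΔ hcost
      have hcards : (((R \ S).card : ℕ) : ℝ) = (R.card : ℝ) - S.card := by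
        rw [Finset.card_sdiff_of_subset hSR]
        exact_mod_cast Nat.cast_sub (Finset.card_le_card hSR)
      rw [hcards] at hf'sum
      have hring : (2 * Δ - 2 : ℝ) / (2 * Δ - 1) * S.card +
          (2 * Δ - 2 : ℝ) / (2 * Δ - 1) * ((R.card : ℝ) - S.card) =
          (2 * Δ - 2 : ℝ) / (2 * Δ - 1) * R.card := by ring
      linarith [hb1, hf'sum, hring]
    -- case analysis on number of uncovered neighbours
    obtain h0 | h1' | h2' : T.card = 0 ∨ T.card = 1 ∨ 2 ≤ T.card := by omega
    · -- τ = 0 : all neighbours of w are covered by M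
      have hAVM : ∀ a, G.Adj w a → a ∈ VM := by
        intro a ha
        by_contra hno
        have haT : a ∈ T := hTmem.mpr ⟨ha, hno⟩
        rw [Finset.card_eq_zero.mp h0] at haT
        simp at haT
      have hmΔ : M.card + 1 ≤ Δ := by omega
      set f₀ : Sym2 V → ℕ := fun e => if e ∈ M then 2 else 0 with hf₀
      have hfM : ∀ e ∈ M, f₀ e = 2 := by intro e he; simp [hf₀, he]
      have hsum : ∑ e : Sym2 V, f₀ e = 2 * M.card := by
        simp only [hf₀]
        rw [Finset.sum_ite_mem, Finset.univ_inter, Finset.sum_const, smul_eq_mul, mul_comm]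
      apply RECUR (insert w VM) f₀
      · exact Finset.insert_subset hwR hVMR
      · exact Finset.mem_insert_self w VM
      · intro e; simp only [hf₀]; split <;> omega
      · intro e hne
        simp only [hf₀] at hne
        by_cases heM : e ∈ M
        · exact mem_edgeFinset.mp (hMe heM)
        · simp [heM] at hne
      · intro e hne
        simp only [hf₀] at hne
        by_cases heM : e ∈ M
        · obtain ⟨v, hv, hvVM⟩ := hMS e heM
          exact ⟨v, hv, Finset.mem_insert_of_mem hvVM⟩
        · simp [heM] at hne
      · intro e heE hex hf0
        obtain ⟨v, hve, hvS⟩ := hex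
        obtain ⟨z, rfl⟩ := Sym2.mem_iff_exists.mp hve
        have hvz : G.Adj v z := (G.mem_edgeSet).mp heE
        rcases Finset.mem_insert.mp hvS with rfl | hvVM
        · exact HDOM f₀ hfM _ hf0 z (Sym2.mem_mk_right v z) (hAVM z hvz)
        · exact HDOM f₀ hfM _ hf0 v (Sym2.mem_mk_left v z) hvVM
      · rw [hsum, Finset.card_insert_of_notMem hVMw, hVMcard]
        exact nat0 Δ M.card hmΔ
    · -- τ = 1 : one uncovered neighbour t; give weight 1 to the edge wt
      obtain ⟨t, hTt⟩ := Finset.card_eq_one.mp h1'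
      have ht : t ∈ T := by rw [hTt]; exact Finset.mem_singleton_self t
      have hwt : G.Adj w t := (hTmem.mp ht).1
      have htVM : t ∉ VM := (hTmem.mp ht).2
      have htw : t ≠ w := fun h => G.loopless.irrefl w (h ▸ hwt)
      have hswtM : s(w,t) ∉ M := fun h => hMw _ h (Sym2.mem_mk_left w t)
      have htR : t ∈ R := (hsupp w t hwt).2
      have hmΔ : M.card + 2 ≤ Δ := by omega
      set f₀ : Sym2 V → ℕ := fun e => if e ∈ M then 2 else if e = s(w,t) then 1 else 0
        with hf₀
      have hfM : ∀ e ∈ M, f₀ e = 2 := by intro e he; simp [hf₀, he]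
      have hfswt : f₀ s(w,t) = 1 := by simp [hf₀, hswtM]
      have hsum : ∑ e : Sym2 V, f₀ e = 2 * M.card + 1 := by
        have hfeq : f₀ = fun e =>
            (if e ∈ M then 2 else 0) + (if e = s(w,t) then 1 else 0) := by
          funext e
          by_cases heM : e ∈ M
          · have hne : e ≠ s(w,t) := fun h => hswtM (h ▸ heM)
            simp [hf₀, heM, hne]
          · simp [hf₀, heM]
        rw [hfeq, Finset.sum_add_distrib, Finset.sum_ite_mem, Finset.univ_inter,
          Finset.sum_const, smul_eq_mul, Finset.sum_ite_eq']
        simp [mul_comm]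
      have hwnotin : w ∉ insert t VM := by
        intro hmem
        rcases Finset.mem_insert.mp hmem with h | h
        · exact htw h.symm
        · exact hVMw h
      have hScard : (insert w (insert t VM)).card = 2 * M.card + 2 := by
        rw [Finset.card_insert_of_notMem hwnotin,
          Finset.card_insert_of_notMem htVM, hVMcard]
      apply RECUR (insert w (insert t VM)) f₀
      · exact Finset.insert_subset hwR (Finset.insert_subset htR hVMR)
      · exact Finset.mem_insert_self _ _
      · intro e; simp only [hf₀]; split_ifs <;> omega
      · intro e hne
        simp only [hf₀] at hne
        by_cases heM : e ∈ M
        · exact mem_edgeFinset.mp (hMe heM)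
        · by_cases hesw : e = s(w,t)
          · subst hesw; exact (G.mem_edgeSet).mpr hwt
          · simp [heM, hesw] at hne
      · intro e hne
        simp only [hf₀] at hne
        by_cases heM : e ∈ M
        · obtain ⟨v, hv, hvVM⟩ := hMS e heM
          exact ⟨v, hv, Finset.mem_insert_of_mem (Finset.mem_insert_of_mem hvVM)⟩
        · by_cases hesw : e = s(w,t)
          · subst hesw
            exact ⟨w, Sym2.mem_mk_left w t, Finset.mem_insert_self _ _⟩
          · simp [heM, hesw] at hne
      · intro e heE hex hf0
        obtain ⟨v, hve, hvS⟩ := hex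
        obtain ⟨z, rfl⟩ := Sym2.mem_iff_exists.mp hve
        have hvz : G.Adj v z := (G.mem_edgeSet).mp heE
        rcases Finset.mem_insert.mp hvS with rfl | hvS'
        · -- v = w
          by_cases hzVM : z ∈ VM
          · exact HDOM f₀ hfM _ hf0 z (Sym2.mem_mk_right _ z) hzVM
          · have hzT : z ∈ T := hTmem.mpr ⟨hvz, hzVM⟩
            have hzt : z = t := by rw [hTt] at hzT; exact Finset.mem_singleton.mp hzT
            subst hzt
            rw [hfswt] at hf0
            exact absurd hf0 one_ne_zero
        · rcases Finset.mem_insert.mp hvS' with rfl | hvVM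
          · -- v = t
            rcases hF2 v ht z hvz with rfl | hzVM
            · rw [Sym2.eq_swap, hfswt] at hf0
              exact absurd hf0 one_ne_zero
            · exact HDOM f₀ hfM _ hf0 z (Sym2.mem_mk_right _ z) hzVM
          · exact HDOM f₀ hfM _ hf0 v (Sym2.mem_mk_left v z) hvVM
      · rw [hsum, hScard]
        exact nat1 Δ M.card hmΔ
    · -- τ ≥ 2 : give weight 2 to wt and delete all of T as well
      obtain ⟨t, ht⟩ := Finset.card_pos.mp (show 0 < T.card by omega)
      have hwt : G.Adj w t := (hTmem.mp ht).1
      have htVM : t ∉ VM := (hTmem.mp ht).2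
      have htw : t ≠ w := fun h => G.loopless.irrefl w (h ▸ hwt)
      have hswtM : s(w,t) ∉ M := fun h => hMw _ h (Sym2.mem_mk_left w t)
      have hwT : w ∉ T := fun h => G.loopless.irrefl w (hTmem.mp h).1
      have hmΔ : M.card + T.card + 1 ≤ Δ := by omega
      set f₀ : Sym2 V → ℕ := fun e => if e ∈ M then 2 else if e = s(w,t) then 2 else 0
        with hf₀
      have hfM : ∀ e ∈ M, f₀ e = 2 := by intro e he; simp [hf₀, he]
      have hfswt : f₀ s(w,t) = 2 := by simp [hf₀, hswtM]
      set S : Finset V := VM ∪ insert w T with hS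
      have hdisj : Disjoint VM (insert w T) := by
        rw [Finset.disjoint_right]
        intro x hx
        rcases Finset.mem_insert.mp hx with rfl | hxT
        · exact hVMw
        · exact (hTmem.mp hxT).2
      have hScard : S.card = 2 * M.card + 1 + T.card := by
        rw [hS, Finset.card_union_of_disjoint hdisj,
          Finset.card_insert_of_notMem hwT, hVMcard]
        omega
      have hsum : ∑ e : Sym2 V, f₀ e = 2 * M.card + 2 := by
        have hfeq : f₀ = fun e =>
            (if e ∈ M then 2 else 0) + (if e = s(w,t) then 2 else 0) := by
          funext e
          by_cases heM : e ∈ M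
          · have hne : e ≠ s(w,t) := fun h => hswtM (h ▸ heM)
            simp [hf₀, heM, hne]
          · simp [hf₀, heM]
        rw [hfeq, Finset.sum_add_distrib, Finset.sum_ite_mem, Finset.univ_inter,
          Finset.sum_const, smul_eq_mul, Finset.sum_ite_eq']
        simp [mul_comm]
      have hwS : w ∈ S := by
        rw [hS]; exact Finset.mem_union_right _ (Finset.mem_insert_self _ _)
      have hVMS : ∀ x ∈ VM, x ∈ S := fun x hx => by
        rw [hS]; exact Finset.mem_union_left _ hx
      have hswtE : s(w,t) ∈ G.edgeSet := (G.mem_edgeSet).mpr hwt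
      apply RECUR S f₀
      · rw [hS]
        exact Finset.union_subset (fun x hx => hVMR x hx)
          (Finset.insert_subset hwR (fun x hx => hTR x hx))
      · exact hwS
      · intro e; simp only [hf₀]; split_ifs <;> omega
      · intro e hne
        simp only [hf₀] at hne
        by_cases heM : e ∈ M
        · exact mem_edgeFinset.mp (hMe heM)
        · by_cases hesw : e = s(w,t)
          · subst hesw; exact hswtE
          · simp [heM, hesw] at hne
      · intro e hne
        simp only [hf₀] at hne
        by_cases heM : e ∈ M
        · obtain ⟨v, hv, hvVM⟩ := hMS e heM
          exact ⟨v, hv, hVMS v hvVM⟩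
        · by_cases hesw : e = s(w,t)
          · subst hesw; exact ⟨w, Sym2.mem_mk_left w t, hwS⟩
          · simp [heM, hesw] at hne
      · intro e heE hex hf0
        obtain ⟨v, hve, hvS⟩ := hex
        obtain ⟨z, rfl⟩ := Sym2.mem_iff_exists.mp hve
        have hvz : G.Adj v z := (G.mem_edgeSet).mp heE
        rw [hS] at hvS
        rcases Finset.mem_union.mp hvS with hvVM | hvwt
        · exact HDOM f₀ hfM _ hf0 v (Sym2.mem_mk_left v z) hvVM
        · rcases Finset.mem_insert.mp hvwt with rfl | hvT
          · -- v = w and z is a neighbour of w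
            by_cases hzVM : z ∈ VM
            · exact HDOM f₀ hfM _ hf0 z (Sym2.mem_mk_right _ z) hzVM
            · by_cases hzt : z = t
              · subst hzt
                rw [hfswt] at hf0
                exact absurd hf0 (by omega)
              · refine ⟨s(v,t), hswtE, hfswt, ?_, v, Sym2.mem_mk_left _ z,
                  Sym2.mem_mk_left v t⟩
                intro h
                exact hzt (Sym2.congr_right.mp h).symm
          · -- v ∈ T
            rcases hF2 v hvT z hvz with rfl | hzVM
            · by_cases hvt : v = t
              · subst hvt
                rw [Sym2.eq_swap, hfswt] at hf0
                exact absurd hf0 (by omega)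
              · refine ⟨s(z,t), hswtE, hfswt, ?_, z, Sym2.mem_mk_right v z,
                  Sym2.mem_mk_left z t⟩
                intro h
                have htm : t ∈ s(v,z) := h ▸ Sym2.mem_mk_right z t
                rcases Sym2.mem_iff.mp htm with h' | h'
                · exact hvt h'.symm
                · exact htw h'
            · exact HDOM f₀ hfM _ hf0 z (Sym2.mem_mk_right v z) hzVM
      · rw [hsum, hScard]
        exact nat2 Δ M.card T.card h2' hmΔ

end ERDaux

/-- Let `G` be a graph of maximum degree `Δ ≥ 1` on `n` vertices. If every connected
component of `G` contains a vertex of degree less than `Δ`, then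
`γ'_R(G) ≤ ((2Δ − 2)/(2Δ − 1))·n`. -/
theorem edgeRomanNumber_le_of_nonregular_components {V : Type*} [Fintype V] [DecidableEq V]
    (G : SimpleGraph V) [DecidableRel G.Adj] (Δ : ℕ) (hΔ : 1 ≤ Δ)
    (hdeg : ∀ v, G.degree v ≤ Δ)
    (hcomp : ∀ v : V, ∃ w : V, G.Reachable v w ∧ G.degree w < Δ) :
    (edgeRomanNumber V G : ℝ) ≤
      (2 * Δ - 2 : ℝ) / (2 * Δ - 1) * Fintype.card V := by
  obtain ⟨f, hf, hsum⟩ := ERDaux.main_ind Δ hΔ (Fintype.card V) G Finset.univ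
    (le_of_eq Finset.card_univ) (fun x y _ => ⟨Finset.mem_univ x, Finset.mem_univ y⟩)
    hdeg (fun v _ => hcomp v)
  have hle : edgeRomanNumber V G ≤ ∑ e : Sym2 V, f e :=
    Nat.sInf_le ⟨f, hf, rfl⟩
  calc (edgeRomanNumber V G : ℝ) ≤ ((∑ e : Sym2 V, f e : ℕ) : ℝ) := by exact_mod_cast hle
    _ ≤ (2 * Δ - 2 : ℝ) / (2 * Δ - 1) * (Finset.univ : Finset V).card := hsum
    _ = (2 * Δ - 2 : ℝ) / (2 * Δ - 1) * Fintype.card V := by rw [Finset.card_univ]
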